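/- For a > 0, let y₁(a,s) = a + ∫₀^s 2e^{−2a}·t·((2e^{−2a}·t² + cosh(2a))² − 1)^{−1/2} dt and Λ₁(a,s) = ∫₀^s e^{a}·(2t² + e^{2a}·sinh(2a)) / (2·(t² + e^{2a}·cosh²(a))·(t² + e^{2a}·sinh²(a))^{1/2}) dt, and define e₁(a,s) = cosh(y₁(a,s))·( ∂Λ₁/∂a(a,s)·∂y₁/∂s(a,s) − ∂Λ₁/∂s(a,s)·∂y₁/∂a(a,s) ). Then e₁(a,·) is a smooth even function of s with e₁(a,0) = −1, e₁(a,s) → +∞ as s → ∞, and e₁(a,·) has exactly one zero z₁(a) in the open interval (0, ∞). -/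

import Mathlib

open Real MeasureTheory Set Filter Topology

noncomputable def bee (b : ℝ) : ℝ := ((Real.exp b)^2 - 1)/2
noncomputable def ael (b : ℝ) : ℝ := ((Real.exp b)^2 + 1)/2

lemma bee_pos {b : ℝ} (hb : 0 < b) : 0 < bee b := by
  have := Real.one_lt_exp_iff.mpr hb
  unfold bee; nlinarith [Real.exp_pos b]

lemma ael_pos (b : ℝ) : 0 < ael b := by
  unfold ael; nlinarith [Real.exp_pos b]

lemma ael_sq_sub (b : ℝ) : ael b ^2 - bee b ^2 = (Real.exp b)^2 := by
  unfold ael bee; ring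

lemma sq_add_pos {c : ℝ} (hc : 0 < c) (t : ℝ) : 0 < t^2 + c^2 := by positivity

lemma Rt_pos {c : ℝ} (hc : 0 < c) (t : ℝ) : 0 < Real.sqrt (t^2 + c^2) :=
  Real.sqrt_pos.mpr (sq_add_pos hc t)

lemma Rt_sq {c : ℝ} (hc : 0 < c) (t : ℝ) : (Real.sqrt (t^2 + c^2))^2 = t^2 + c^2 :=
  Real.sq_sqrt (sq_add_pos hc t).le

lemma sqrt_div_exp {c : ℝ} (hc : 0 ≤ c) (b t : ℝ) :
    Real.sqrt ((t^2+c)/(Real.exp b)^2) = Real.sqrt (t^2+c) / Real.exp b := by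
  rw [Real.sqrt_div (by positivity), Real.sqrt_sq (Real.exp_pos b).le]

lemma exp_neg_two (b : ℝ) : Real.exp (-2*b) = ((Real.exp b)^2)⁻¹ := by
  rw [show -2*b = -(b+b) by ring, Real.exp_neg, Real.exp_add]; ring

lemma cosh_two (b : ℝ) : Real.cosh (2*b) = ((Real.exp b)^2 + ((Real.exp b)^2)⁻¹)/2 := by
  rw [Real.cosh_eq, show (2:ℝ)*b = b+b by ring, Real.exp_neg, Real.exp_add]; ring

lemma rpow_neg_half {x : ℝ} (hx : 0 < x) : x ^ (-(1:ℝ)/2) = (Real.sqrt x)⁻¹ := by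
  rw [show (-(1:ℝ)/2) = -(1/2) by ring, Real.rpow_neg hx.le, Real.sqrt_eq_rpow]

lemma yint (b : ℝ) (hb : 0 < b) (s : ℝ) :
    (b + ∫ t in (0:ℝ)..s, 2 * Real.exp (-2*b) * t *
      ((2 * Real.exp (-2*b) * t ^ 2 + Real.cosh (2*b)) ^ 2 - 1) ^ (-(1:ℝ)/2))
    = Real.arsinh (Real.sqrt (s^2 + bee b^2) / Real.exp b) := by
  have hE := Real.exp_pos b
  have hβ := bee_pos hb
  have hα := ael_pos b
  have hw : ∀ t : ℝ, 2 * Real.exp (-2*b) * t ^ 2 + Real.cosh (2*b)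
      = 2*((t^2+bee b^2)/(Real.exp b)^2) + 1 := by
    intro t; rw [exp_neg_two, cosh_two]; unfold bee; field_simp; ring
  have hwsq : ∀ t : ℝ, (2 * Real.exp (-2*b) * t ^ 2 + Real.cosh (2*b)) ^ 2 - 1
      = 4*((t^2+bee b^2)/(Real.exp b)^2)*((t^2+ael b^2)/(Real.exp b)^2) := by
    intro t; rw [hw]; unfold bee ael; field_simp; ring
  have hq1 : ∀ t : ℝ, (0:ℝ) < (t^2+bee b^2)/(Real.exp b)^2 := fun t => by positivity
  have hq2 : ∀ t : ℝ, (0:ℝ) < (t^2+ael b^2)/(Real.exp b)^2 := fun t => by positivity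
  have hrpow : ∀ t : ℝ, ((2 * Real.exp (-2*b) * t ^ 2 + Real.cosh (2*b)) ^ 2 - 1) ^ (-(1:ℝ)/2)
      = (2 * (Real.sqrt (t^2+bee b^2)/Real.exp b) * (Real.sqrt (t^2+ael b^2)/Real.exp b))⁻¹ := by
    intro t
    rw [hwsq t, rpow_neg_half (by positivity), show
      4*((t^2+bee b^2)/(Real.exp b)^2)*((t^2+ael b^2)/(Real.exp b)^2)
      = (2:ℝ)^2 * (((t^2+bee b^2)/(Real.exp b)^2)*((t^2+ael b^2)/(Real.exp b)^2)) by ring,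
      Real.sqrt_mul (by positivity), Real.sqrt_sq (by norm_num : (0:ℝ) ≤ 2),
      Real.sqrt_mul (hq1 t).le, sqrt_div_exp (by positivity), sqrt_div_exp (by positivity)]
    ring_nf
  have hF : ∀ t : ℝ, HasDerivAt (fun t => Real.arsinh (Real.sqrt (t^2 + bee b^2) / Real.exp b))
      (2 * Real.exp (-2*b) * t *
        ((2 * Real.exp (-2*b) * t ^ 2 + Real.cosh (2*b)) ^ 2 - 1) ^ (-(1:ℝ)/2)) t := by
    intro t
    have h1 : HasDerivAt (fun t : ℝ => t^2 + bee b^2) (2*t) t := by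
      simpa using (hasDerivAt_pow 2 t).add_const (bee b ^2)
    have h2 := ((Real.hasDerivAt_sqrt (sq_add_pos hβ t).ne').comp t h1).div_const (Real.exp b)
    have h4 := (Real.hasDerivAt_arsinh _).comp t h2
    simp only [Function.comp_def] at h4
    refine h4.congr_deriv ?_; symm
    rw [hrpow t, exp_neg_two, show (1 + (Real.sqrt (t^2+bee b^2)/Real.exp b)^2)
        = (t^2 + ael b^2)/(Real.exp b)^2 by
      rw [div_pow, Rt_sq hβ]; unfold ael bee; field_simp; ring,
      sqrt_div_exp (by positivity)]
    have hRt := Rt_pos hβ t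
    have hAt := Rt_pos hα t
    field_simp
  have hcont : Continuous (fun t : ℝ => 2 * Real.exp (-2*b) * t *
      ((2 * Real.exp (-2*b) * t ^ 2 + Real.cosh (2*b)) ^ 2 - 1) ^ (-(1:ℝ)/2)) := by
    apply Continuous.mul (by continuity)
    apply Continuous.rpow_const (by continuity)
    intro t
    left
    rw [hwsq t]
    positivity
  rw [intervalIntegral.integral_eq_sub_of_hasDerivAt (fun t _ => hF t)
    (hcont.intervalIntegrable 0 s)]
  have h0 : Real.sqrt ((0:ℝ)^2 + bee b^2) / Real.exp b = Real.sinh b := by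
    rw [show (0:ℝ)^2 + bee b^2 = bee b^2 by ring, Real.sqrt_sq hβ.le, Real.sinh_eq,
      Real.exp_neg]
    unfold bee; field_simp
  rw [h0, Real.arsinh_sinh]; ring

lemma exp_two (b : ℝ) : Real.exp (2*b) = (Real.exp b)^2 := by
  rw [show (2:ℝ)*b = b+b by ring, Real.exp_add]; ring

lemma sinhsqE (b : ℝ) : Real.exp (2*b) * Real.sinh b ^ 2 = bee b ^ 2 := by
  rw [exp_two, Real.sinh_eq, Real.exp_neg]; unfold bee
  have := (Real.exp_pos b).ne'
  field_simp

lemma coshsqE (b : ℝ) : Real.exp (2*b) * Real.cosh b ^ 2 = ael b ^ 2 := by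
  rw [exp_two, Real.cosh_eq, Real.exp_neg]; unfold ael
  have := (Real.exp_pos b).ne'
  field_simp

lemma sinhtwoE (b : ℝ) : Real.exp (2*b) * Real.sinh (2*b) = 2 * ael b * bee b := by
  rw [Real.sinh_eq, Real.exp_neg, exp_two]; unfold ael bee
  have := (Real.exp_pos b).ne'
  field_simp; ring

lemma aelsq {b : ℝ} (hb : 0 < b) (t : ℝ) :
    (ael b / Real.exp b)^2 * (t^2 + bee b^2) - t^2
      = bee b^2 * (t^2 + ael b^2) / (Real.exp b)^2 := by
  have := (Real.exp_pos b).ne'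
  unfold ael bee; field_simp; ring

lemma chR_gt {b : ℝ} (hb : 0 < b) (t : ℝ) :
    |t| < ael b / Real.exp b * Real.sqrt (t^2 + bee b^2) := by
  have hβ := bee_pos hb
  have hα := ael_pos b
  have hE := Real.exp_pos b
  have hX : 0 < ael b / Real.exp b * Real.sqrt (t^2 + bee b^2) :=
    mul_pos (by positivity) (Rt_pos hβ t)
  rw [← Real.sqrt_sq_eq_abs, ← Real.sqrt_sq hX.le]
  apply Real.sqrt_lt_sqrt (sq_nonneg t)
  rw [mul_pow, div_pow, Rt_sq hβ]
  have key := aelsq hb t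
  rw [div_pow] at key
  have hpos : 0 < bee b^2 * (t^2 + ael b^2) / (Real.exp b)^2 := by positivity
  nlinarith

lemma chR_add_pos {b : ℝ} (hb : 0 < b) (t : ℝ) :
    0 < ael b / Real.exp b * Real.sqrt (t^2 + bee b^2) + t := by
  have := abs_lt.mp (chR_gt hb t); linarith [this.1]

lemma chR_sub_pos {b : ℝ} (hb : 0 < b) (t : ℝ) :
    0 < ael b / Real.exp b * Real.sqrt (t^2 + bee b^2) - t := by
  have := abs_lt.mp (chR_gt hb t); linarith [this.2]

lemma lint (b : ℝ) (hb : 0 < b) (s : ℝ) :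
    (∫ t in (0:ℝ)..s, Real.exp b * (2 * t ^ 2 + Real.exp (2*b) * Real.sinh (2*b))
        / (2 * (t ^ 2 + Real.exp (2*b) * Real.cosh b ^ 2)
            * Real.sqrt (t ^ 2 + Real.exp (2*b) * Real.sinh b ^ 2)))
    = Real.exp b * Real.arsinh (s / bee b)
      - (1/2) * (Real.log (ael b / Real.exp b * Real.sqrt (s^2 + bee b^2) + s)
               - Real.log (ael b / Real.exp b * Real.sqrt (s^2 + bee b^2) - s)) := by
  have hE := Real.exp_pos b
  have hβ := bee_pos hb
  have hα := ael_pos b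
  have hint : ∀ t : ℝ, Real.exp b * (2 * t ^ 2 + Real.exp (2*b) * Real.sinh (2*b))
        / (2 * (t ^ 2 + Real.exp (2*b) * Real.cosh b ^ 2)
            * Real.sqrt (t ^ 2 + Real.exp (2*b) * Real.sinh b ^ 2))
      = Real.exp b * (2 * t ^ 2 + 2 * ael b * bee b)
        / (2 * (t ^ 2 + ael b ^ 2) * Real.sqrt (t ^ 2 + bee b ^ 2)) := by
    intro t; rw [sinhtwoE, coshsqE, sinhsqE]
  have hG : ∀ t : ℝ, HasDerivAt (fun t => Real.exp b * Real.arsinh (t / bee b)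
      - (1/2) * (Real.log (ael b / Real.exp b * Real.sqrt (t^2 + bee b^2) + t)
               - Real.log (ael b / Real.exp b * Real.sqrt (t^2 + bee b^2) - t)))
      (Real.exp b * (2 * t ^ 2 + Real.exp (2*b) * Real.sinh (2*b))
        / (2 * (t ^ 2 + Real.exp (2*b) * Real.cosh b ^ 2)
            * Real.sqrt (t ^ 2 + Real.exp (2*b) * Real.sinh b ^ 2))) t := by
    intro t
    have hRpos := Rt_pos hβ t
    have h1 : HasDerivAt (fun t : ℝ => t^2 + bee b^2) (2*t) t := by
      simpa using (hasDerivAt_pow 2 t).add_const (bee b ^2)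
    have h2 : HasDerivAt (fun t : ℝ => Real.sqrt (t^2 + bee b^2))
        (1 / (2 * Real.sqrt (t^2 + bee b^2)) * (2*t)) t :=
      (Real.hasDerivAt_sqrt (sq_add_pos hβ t).ne').comp t h1
    have harc : HasDerivAt (fun t : ℝ => Real.exp b * Real.arsinh (t / bee b))
        (Real.exp b * ((Real.sqrt (1 + (t / bee b)^2))⁻¹ * (1 / bee b))) t := by
      have := ((Real.hasDerivAt_arsinh (t / bee b)).comp t
        ((hasDerivAt_id t).div_const (bee b))).const_mul (Real.exp b)
      simpa [Function.comp] using this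
    have hlin1 : HasDerivAt (fun t : ℝ => ael b / Real.exp b * Real.sqrt (t^2 + bee b^2) + t)
        (ael b / Real.exp b * (1 / (2 * Real.sqrt (t^2 + bee b^2)) * (2*t)) + 1) t :=
      (h2.const_mul _).add (hasDerivAt_id t)
    have hlin2 : HasDerivAt (fun t : ℝ => ael b / Real.exp b * Real.sqrt (t^2 + bee b^2) - t)
        (ael b / Real.exp b * (1 / (2 * Real.sqrt (t^2 + bee b^2)) * (2*t)) - 1) t :=
      (h2.const_mul _).sub (hasDerivAt_id t)
    have hlog1 := hlin1.log (chR_add_pos hb t).ne'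
    have hlog2 := hlin2.log (chR_sub_pos hb t).ne'
    have total := harc.sub ((hlog1.sub hlog2).const_mul (1/2))
    refine total.congr_deriv ?_; symm
    rw [hint t]
    set R := Real.sqrt (t^2 + bee b^2) with hRdef
    have hR2 : R^2 = t^2 + bee b^2 := Rt_sq hβ t
    have hs1 : Real.sqrt (1 + (t / bee b)^2) = R / bee b := by
      rw [show 1 + (t / bee b)^2 = (t^2 + bee b^2) / bee b^2 by field_simp; ring,
        Real.sqrt_div (by positivity), Real.sqrt_sq hβ.le, hRdef]
    rw [hs1]
    have hne1 := (chR_add_pos hb t).ne'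
    have hne2 := (chR_sub_pos hb t).ne'
    rw [← hRdef] at hne1 hne2
    have hD := aelsq hb t
    have hD2 : 0 < bee b^2 * (t^2 + ael b^2) / (Real.exp b)^2 := by positivity
    have key : (ael b / Real.exp b * (1 / (2 * R) * (2*t)) + 1) / (ael b / Real.exp b * R + t)
        - (ael b / Real.exp b * (1 / (2 * R) * (2*t)) - 1) / (ael b / Real.exp b * R - t)
        = (2 * (ael b / Real.exp b) * bee b^2 / R)
          / (bee b^2 * (t^2 + ael b^2) / (Real.exp b)^2) := by
      rw [div_sub_div _ _ hne1 hne2]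
      have hden : (ael b / Real.exp b * R + t) * (ael b / Real.exp b * R - t)
          = bee b^2 * (t^2 + ael b^2) / (Real.exp b)^2 := by
        rw [show (ael b / Real.exp b * R + t) * (ael b / Real.exp b * R - t)
            = (ael b / Real.exp b)^2 * R^2 - t^2 by ring, hR2, hD]
      rw [hden]
      congr 1
      field_simp
      linear_combination (2 * ael b * Real.exp b) * hR2
    rw [key]
    have hABE : ael b = bee b + 1 := by unfold ael bee; ring
    rw [hABE]
    have h3 : t^2 + (bee b+1)^2 ≠ 0 := by positivity
    field_simp
    ring
  have hcont : Continuous (fun t : ℝ => Real.exp b * (2 * t ^ 2 + Real.exp (2*b) * Real.sinh (2*b))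
        / (2 * (t ^ 2 + Real.exp (2*b) * Real.cosh b ^ 2)
            * Real.sqrt (t ^ 2 + Real.exp (2*b) * Real.sinh b ^ 2))) := by
    apply Continuous.div (by continuity)
    · exact (continuous_const.mul ((continuous_pow 2).add continuous_const)).mul
        (((continuous_pow 2).add continuous_const).sqrt)
    · intro t
      have h1 : 0 < t ^ 2 + Real.exp (2*b) * Real.cosh b ^ 2 := by
        rw [coshsqE]; exact sq_add_pos hα t
      have h2 : 0 < Real.sqrt (t ^ 2 + Real.exp (2*b) * Real.sinh b ^ 2) := by
        rw [sinhsqE]; exact Rt_pos hβ t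
      positivity
  rw [intervalIntegral.integral_eq_sub_of_hasDerivAt (fun t _ => hG t)
    (hcont.intervalIntegrable 0 s)]
  have h0R : Real.sqrt ((0:ℝ)^2 + bee b^2) = bee b := by
    rw [show (0:ℝ)^2 + bee b^2 = bee b^2 by ring, Real.sqrt_sq hβ.le]
  simp [h0R]

lemma sqrt_one_add {b : ℝ} (hb : 0 < b) (t : ℝ) :
    Real.sqrt (1 + (Real.sqrt (t^2+bee b^2)/Real.exp b)^2)
      = Real.sqrt (t^2 + ael b^2) / Real.exp b := by
  rw [div_pow, Rt_sq (bee_pos hb), show 1 + (t^2+bee b^2)/(Real.exp b)^2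
      = (t^2 + ael b^2)/(Real.exp b)^2 by
    have := (Real.exp_pos b).ne'; unfold ael bee; field_simp; ring,
    sqrt_div_exp (by positivity) b t]

lemma sqrt_one_add' {b : ℝ} (hb : 0 < b) (t : ℝ) :
    Real.sqrt (1 + (t / bee b)^2) = Real.sqrt (t^2 + bee b^2) / bee b := by
  have hβ := bee_pos hb
  rw [show 1 + (t / bee b)^2 = (t^2 + bee b^2) / bee b^2 by field_simp; ring,
    Real.sqrt_div (by positivity), Real.sqrt_sq hβ.le]

lemma ycf_hasDerivAt_s {b : ℝ} (hb : 0 < b) (s : ℝ) :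
    HasDerivAt (fun s : ℝ => Real.arsinh (Real.sqrt (s^2+bee b^2)/Real.exp b))
      (s / (Real.sqrt (s^2+bee b^2) * Real.sqrt (s^2+ael b^2))) s := by
  have hE := Real.exp_pos b
  have hβ := bee_pos hb
  have hα := ael_pos b
  have h1 : HasDerivAt (fun s : ℝ => s^2 + bee b^2) (2*s) s := by
    simpa using (hasDerivAt_pow 2 s).add_const (bee b ^2)
  have h2 := ((Real.hasDerivAt_sqrt (sq_add_pos hβ s).ne').comp s h1).div_const (Real.exp b)
  have h4 := (Real.hasDerivAt_arsinh _).comp s h2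
  simp only [Function.comp_def] at h4
  refine h4.congr_deriv ?_; symm
  rw [sqrt_one_add hb s]
  have hR := Rt_pos hβ s
  have hA := Rt_pos hα s
  field_simp

lemma bee_hasDerivAt (a : ℝ) : HasDerivAt bee ((Real.exp a)^2) a := by
  unfold bee
  have h := (((Real.hasDerivAt_exp a).pow 2).sub_const 1).div_const 2
  refine h.congr_deriv ?_; symm
  push_cast; ring

lemma ael_hasDerivAt (a : ℝ) : HasDerivAt ael ((Real.exp a)^2) a := by
  unfold ael
  have h := (((Real.hasDerivAt_exp a).pow 2).add_const 1).div_const 2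
  refine h.congr_deriv ?_; symm
  push_cast; ring

lemma sqrtR_hasDerivAt_b (s : ℝ) {a : ℝ} (ha : 0 < a) :
    HasDerivAt (fun b => Real.sqrt (s^2 + bee b^2))
      (1 / (2 * Real.sqrt (s^2 + bee a^2)) * (2 * bee a * (Real.exp a)^2)) a := by
  have hβ := bee_pos ha
  have hinner : HasDerivAt (fun b => s^2 + bee b^2) (2 * bee a * (Real.exp a)^2) a := by
    have h := ((bee_hasDerivAt a).pow 2).const_add (s^2)
    refine h.congr_deriv ?_; symm; push_cast; ring
  exact (Real.hasDerivAt_sqrt (sq_add_pos hβ s).ne').comp a hinner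

lemma ycf_hasDerivAt_b (s : ℝ) {a : ℝ} (ha : 0 < a) :
    HasDerivAt (fun b => Real.arsinh (Real.sqrt (s^2+bee b^2)/Real.exp b))
      ((ael a * bee a - s^2) / (Real.sqrt (s^2+bee a^2) * Real.sqrt (s^2+ael a^2))) a := by
  have hE := Real.exp_pos a
  have hβ := bee_pos ha
  have hα := ael_pos a
  have hdiv := (sqrtR_hasDerivAt_b s ha).div (Real.hasDerivAt_exp a) hE.ne'
  have hars := (Real.hasDerivAt_arsinh _).comp a hdiv
  simp only [Function.comp_def, Pi.div_apply] at hars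
  refine hars.congr_deriv ?_; symm
  rw [sqrt_one_add ha s]
  set R := Real.sqrt (s^2 + bee a^2) with hRdef
  have hR2 : R^2 = s^2 + bee a^2 := Rt_sq hβ s
  have hRpos : 0 < R := Rt_pos hβ s
  have hApos : 0 < Real.sqrt (s^2 + ael a^2) := Rt_pos hα s
  have hABE : ael a = bee a + 1 := by unfold ael bee; ring
  have hE2 : (Real.exp a)^2 = 2 * bee a + 1 := by unfold bee; ring
  rw [hABE, hE2]
  field_simp
  linear_combination (2*bee a+1) * hR2 - (bee a*(2*bee a+1) - R^2) * hE2

lemma lcf_hasDerivAt_s {b : ℝ} (hb : 0 < b) (t : ℝ) :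
    HasDerivAt (fun t => Real.exp b * Real.arsinh (t / bee b)
      - (1/2) * (Real.log (ael b / Real.exp b * Real.sqrt (t^2 + bee b^2) + t)
               - Real.log (ael b / Real.exp b * Real.sqrt (t^2 + bee b^2) - t)))
      (Real.exp b * (t^2 + ael b * bee b)
        / ((t^2 + ael b^2) * Real.sqrt (t^2 + bee b^2))) t := by
  have hE := Real.exp_pos b
  have hβ := bee_pos hb
  have hα := ael_pos b
  have hRpos := Rt_pos hβ t
  have h1 : HasDerivAt (fun t : ℝ => t^2 + bee b^2) (2*t) t := by
    simpa using (hasDerivAt_pow 2 t).add_const (bee b ^2)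
  have h2 : HasDerivAt (fun t : ℝ => Real.sqrt (t^2 + bee b^2))
      (1 / (2 * Real.sqrt (t^2 + bee b^2)) * (2*t)) t :=
    (Real.hasDerivAt_sqrt (sq_add_pos hβ t).ne').comp t h1
  have harc : HasDerivAt (fun t : ℝ => Real.exp b * Real.arsinh (t / bee b))
      (Real.exp b * ((Real.sqrt (1 + (t / bee b)^2))⁻¹ * (1 / bee b))) t := by
    have := ((Real.hasDerivAt_arsinh (t / bee b)).comp t
      ((hasDerivAt_id t).div_const (bee b))).const_mul (Real.exp b)
    simpa [Function.comp] using this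
  have hlin1 : HasDerivAt (fun t : ℝ => ael b / Real.exp b * Real.sqrt (t^2 + bee b^2) + t)
      (ael b / Real.exp b * (1 / (2 * Real.sqrt (t^2 + bee b^2)) * (2*t)) + 1) t :=
    (h2.const_mul _).add (hasDerivAt_id t)
  have hlin2 : HasDerivAt (fun t : ℝ => ael b / Real.exp b * Real.sqrt (t^2 + bee b^2) - t)
      (ael b / Real.exp b * (1 / (2 * Real.sqrt (t^2 + bee b^2)) * (2*t)) - 1) t :=
    (h2.const_mul _).sub (hasDerivAt_id t)
  have hlog1 := hlin1.log (chR_add_pos hb t).ne'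
  have hlog2 := hlin2.log (chR_sub_pos hb t).ne'
  have total := harc.sub ((hlog1.sub hlog2).const_mul (1/2))
  refine total.congr_deriv ?_; symm
  set R := Real.sqrt (t^2 + bee b^2) with hRdef
  have hR2 : R^2 = t^2 + bee b^2 := Rt_sq hβ t
  rw [sqrt_one_add' hb t, ← hRdef]
  have hne1 := (chR_add_pos hb t).ne'
  have hne2 := (chR_sub_pos hb t).ne'
  rw [← hRdef] at hne1 hne2
  have hD := aelsq hb t
  have hD2 : 0 < bee b^2 * (t^2 + ael b^2) / (Real.exp b)^2 := by positivity
  have key : (ael b / Real.exp b * (1 / (2 * R) * (2*t)) + 1) / (ael b / Real.exp b * R + t)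
      - (ael b / Real.exp b * (1 / (2 * R) * (2*t)) - 1) / (ael b / Real.exp b * R - t)
      = (2 * (ael b / Real.exp b) * bee b^2 / R)
        / (bee b^2 * (t^2 + ael b^2) / (Real.exp b)^2) := by
    rw [div_sub_div _ _ hne1 hne2]
    have hden : (ael b / Real.exp b * R + t) * (ael b / Real.exp b * R - t)
        = bee b^2 * (t^2 + ael b^2) / (Real.exp b)^2 := by
      rw [show (ael b / Real.exp b * R + t) * (ael b / Real.exp b * R - t)
          = (ael b / Real.exp b)^2 * R^2 - t^2 by ring, hR2, hD]
    rw [hden]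
    congr 1
    field_simp
    linear_combination (2 * ael b * Real.exp b) * hR2
  rw [key]
  have hABE : ael b = bee b + 1 := by unfold ael bee; ring
  rw [hABE]
  have h3 : t^2 + (bee b+1)^2 ≠ 0 := by positivity
  field_simp
  ring

lemma lcf_hasDerivAt_b (s : ℝ) {a : ℝ} (ha : 0 < a) :
    HasDerivAt (fun b => Real.exp b * Real.arsinh (s / bee b)
      - (1/2) * (Real.log (ael b / Real.exp b * Real.sqrt (s^2 + bee b^2) + s)
               - Real.log (ael b / Real.exp b * Real.sqrt (s^2 + bee b^2) - s)))
      (Real.exp a * Real.arsinh (s / bee a)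
        - (Real.exp a)^3 * s / (bee a * Real.sqrt (s^2 + bee a^2))
        + Real.exp a * s * ((s^2 + bee a^2) + (Real.exp a)^2 * ael a)
            / (Real.sqrt (s^2 + bee a^2) * bee a * (s^2 + ael a^2))) a := by
  have hE := Real.exp_pos a
  have hβ := bee_pos ha
  have hα := ael_pos a
  have hRpos := Rt_pos hβ s
  have hsb : HasDerivAt (fun b => s / bee b) ((0 * bee a - s * (Real.exp a)^2)/(bee a)^2) a :=
    (hasDerivAt_const a s).div (bee_hasDerivAt a) hβ.ne'
  have hin := (Real.hasDerivAt_arsinh _).comp a hsb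
  simp only [Function.comp_def] at hin
  have T1 := (Real.hasDerivAt_exp a).mul hin
  have hq := (ael_hasDerivAt a).div (Real.hasDerivAt_exp a) hE.ne'
  have hsq := sqrtR_hasDerivAt_b s ha
  have hw1 := (hq.mul hsq).add_const s
  have hw2 := (hq.mul hsq).sub_const s
  have hlog1 := hw1.log (chR_add_pos ha s).ne'
  have hlog2 := hw2.log (chR_sub_pos ha s).ne'
  have total := T1.sub ((hlog1.sub hlog2).const_mul (1/2))
  simp only [Pi.div_apply, Pi.mul_apply] at total
  refine total.congr_deriv ?_; symm
  rw [sqrt_one_add' ha s]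
  set R := Real.sqrt (s^2 + bee a^2) with hRdef
  have hR2 : R^2 = s^2 + bee a^2 := Rt_sq hβ s
  have hne1 := (chR_add_pos ha s).ne'
  have hne2 := (chR_sub_pos ha s).ne'
  rw [← hRdef] at hne1 hne2
  have hA2pos : (0:ℝ) < s^2 + ael a^2 := sq_add_pos hα s
  have hABE : ael a = bee a + 1 := by unfold ael bee; ring
  have hE2 : (Real.exp a)^2 = 2 * bee a + 1 := by unfold bee; ring
  have hden : (ael a / Real.exp a * R + s) * (ael a / Real.exp a * R - s)
      = bee a^2 * (s^2 + ael a^2) / (Real.exp a)^2 := by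
    rw [show (ael a / Real.exp a * R + s) * (ael a / Real.exp a * R - s)
        = (ael a / Real.exp a)^2 * R^2 - s^2 by ring, hR2, aelsq ha s]
  have key : ∀ w : ℝ, w / (ael a / Real.exp a * R + s) - w / (ael a / Real.exp a * R - s)
      = (-2*s*w) / (bee a^2 * (s^2 + ael a^2) / (Real.exp a)^2) := by
    intro w
    rw [div_sub_div _ _ hne1 hne2, hden]
    congr 1
    ring
  rw [key]
  rw [hABE]
  have h3 : s^2 + (bee a+1)^2 ≠ 0 := by positivity
  field_simp
  linear_combination (-s*(Real.exp a^2 - bee a - 1)) * hR2 - (s*(s^2+bee a^2)) * hE2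

/-- The variation Jacobi field `e₁(a,s) = cosh(y₁)·(∂_a Λ₁ ∂_s y₁ − ∂_s Λ₁ ∂_a y₁)` on the
embedded catenoid cousin `𝒞_{1,a}` in `ℍ³(−1)` is smooth, even, takes the value `−1` at
`s = 0`, tends to `+∞` at infinity, and has exactly one zero `z₁(a)` in `(0, ∞)`. -/
theorem stmt19 (a : ℝ) (ha : 0 < a)
    (y₁ Λ₁ : ℝ → ℝ → ℝ) (e₁ : ℝ → ℝ)
    (hy : ∀ b s, y₁ b s = b + ∫ t in (0:ℝ)..s,
      2 * Real.exp (-2*b) * t *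
        ((2 * Real.exp (-2*b) * t ^ 2 + Real.cosh (2*b)) ^ 2 - 1) ^ (-(1:ℝ)/2))
    (hΛ : ∀ b s, Λ₁ b s = ∫ t in (0:ℝ)..s,
      Real.exp b * (2 * t ^ 2 + Real.exp (2*b) * Real.sinh (2*b))
        / (2 * (t ^ 2 + Real.exp (2*b) * Real.cosh b ^ 2)
            * Real.sqrt (t ^ 2 + Real.exp (2*b) * Real.sinh b ^ 2)))
    (he : ∀ s, e₁ s = Real.cosh (y₁ a s) *
      (deriv (fun b => Λ₁ b s) a * deriv (y₁ a) s
        - deriv (Λ₁ a) s * deriv (fun b => y₁ b s) a)) :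
    ContDiff ℝ (⊤ : ℕ∞) e₁ ∧ (∀ s, e₁ (-s) = e₁ s) ∧ e₁ 0 = -1 ∧
    Filter.Tendsto e₁ Filter.atTop Filter.atTop ∧
    ∃ z : ℝ, 0 < z ∧ e₁ z = 0 ∧ ∀ s, 0 < s → e₁ s = 0 → s = z := by
  have hE := Real.exp_pos a
  have hβ := bee_pos ha
  have hα := ael_pos a
  have hyfun : y₁ a = fun s => Real.arsinh (Real.sqrt (s^2 + bee a^2)/Real.exp a) :=
    funext fun s => by rw [hy a s]; exact yint a ha s
  have hlfun : Λ₁ a = fun s => Real.exp a * Real.arsinh (s / bee a)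
      - (1/2) * (Real.log (ael a / Real.exp a * Real.sqrt (s^2 + bee a^2) + s)
               - Real.log (ael a / Real.exp a * Real.sqrt (s^2 + bee a^2) - s)) :=
    funext fun s => by rw [hΛ a s]; exact lint a ha s
  have hE1 : ∀ s, e₁ s = s * Real.arsinh (s / bee a) / Real.sqrt (s^2 + bee a^2) - 1 := by
    intro s
    have hRpos := Rt_pos hβ s
    have hApos := Rt_pos hα s
    have hA2pos := sq_add_pos hα s
    rw [he s]
    have d1 : deriv (y₁ a) s
        = s / (Real.sqrt (s^2+bee a^2) * Real.sqrt (s^2+ael a^2)) := by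
      rw [hyfun]; exact (ycf_hasDerivAt_s ha s).deriv
    have d2 : deriv (fun b => y₁ b s) a
        = (ael a * bee a - s^2) / (Real.sqrt (s^2+bee a^2) * Real.sqrt (s^2+ael a^2)) := by
      have heq : (fun b => y₁ b s) =ᶠ[𝓝 a]
          (fun b => Real.arsinh (Real.sqrt (s^2+bee b^2)/Real.exp b)) := by
        filter_upwards [isOpen_Ioi.mem_nhds ha] with b hb
        rw [hy b s]; exact yint b hb s
      rw [heq.deriv_eq]; exact (ycf_hasDerivAt_b s ha).deriv
    have d3 : deriv (Λ₁ a) s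
        = Real.exp a * (s^2 + ael a * bee a)
          / ((s^2 + ael a^2) * Real.sqrt (s^2 + bee a^2)) := by
      rw [hlfun]; exact (lcf_hasDerivAt_s ha s).deriv
    have d4 : deriv (fun b => Λ₁ b s) a
        = Real.exp a * Real.arsinh (s / bee a)
          - (Real.exp a)^3 * s / (bee a * Real.sqrt (s^2 + bee a^2))
          + Real.exp a * s * ((s^2 + bee a^2) + (Real.exp a)^2 * ael a)
              / (Real.sqrt (s^2 + bee a^2) * bee a * (s^2 + ael a^2)) := by
      have heq : (fun b => Λ₁ b s) =ᶠ[𝓝 a]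
          (fun b => Real.exp b * Real.arsinh (s / bee b)
            - (1/2) * (Real.log (ael b / Real.exp b * Real.sqrt (s^2 + bee b^2) + s)
                     - Real.log (ael b / Real.exp b * Real.sqrt (s^2 + bee b^2) - s))) := by
        filter_upwards [isOpen_Ioi.mem_nhds ha] with b hb
        rw [hΛ b s]; exact lint b hb s
      rw [heq.deriv_eq]; exact (lcf_hasDerivAt_b s ha).deriv
    have hcosh : Real.cosh (y₁ a s) = Real.sqrt (s^2 + ael a^2)/Real.exp a := by
      rw [hyfun]
      simp only []
      rw [Real.cosh_arsinh, sqrt_one_add ha s]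
    rw [d1, d2, d3, d4, hcosh]
    set R := Real.sqrt (s^2 + bee a^2) with hRdef
    set A := Real.sqrt (s^2 + ael a^2) with hAdef
    have hR2 : R^2 = s^2 + bee a^2 := Rt_sq hβ s
    have hA2 : A^2 = s^2 + ael a^2 := Rt_sq hα s
    have hABE : ael a = bee a + 1 := by unfold ael bee; ring
    have hE2 : (Real.exp a)^2 = 2 * bee a + 1 := by unfold bee; ring
    rw [hABE] at hA2 ⊢
    field_simp
    linear_combination (bee a*(s^2+(bee a+1)^2)) * hR2 + (s^2*(bee a+1-s^2-(bee a+1)^2)) * hE2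
  clear he hy hΛ hyfun hlfun
  have hefun : e₁ = fun s => s * Real.arsinh (s / bee a) / Real.sqrt (s^2 + bee a^2) - 1 :=
    funext hE1
  -- smoothness
  have hsmooth : ContDiff ℝ (⊤ : ℕ∞) e₁ := by
    rw [hefun]
    have hsq : ContDiff ℝ (⊤ : ℕ∞) (fun s : ℝ => Real.sqrt (s^2 + bee a^2)) :=
      ContDiff.sqrt ((contDiff_id.pow 2).add contDiff_const)
        (fun s => (sq_add_pos hβ s).ne')
    exact ((contDiff_id.mul (Real.contDiff_arsinh.comp (contDiff_id.div_const _))).div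
      hsq (fun s => (Rt_pos hβ s).ne')).sub contDiff_const
  -- evenness
  have heven : ∀ s, e₁ (-s) = e₁ s := by
    intro s
    rw [hE1 (-s), hE1 s, neg_sq, neg_div, Real.arsinh_neg]
    ring
  -- value at 0
  have hzero : e₁ 0 = -1 := by
    rw [hE1 0]; simp
  -- tendsto atTop
  have harsinh_top : Tendsto Real.arsinh atTop atTop := by
    apply tendsto_atTop_mono' atTop ?_ Real.tendsto_log_atTop
    filter_upwards [eventually_gt_atTop (0:ℝ)] with x hx
    have : x ≤ x + Real.sqrt (1 + x^2) := le_add_of_nonneg_right (Real.sqrt_nonneg _)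
    simpa [Real.arsinh] using Real.log_le_log hx this
  have h2top : Tendsto (fun s : ℝ => Real.arsinh (s / bee a)) atTop atTop :=
    harsinh_top.comp (tendsto_id.atTop_div_const hβ)
  have hlower : ∀ᶠ s : ℝ in atTop,
      (1/2) * Real.arsinh (s / bee a) - 1 ≤ e₁ s := by
    filter_upwards [eventually_ge_atTop (bee a), eventually_gt_atTop (0:ℝ)] with s hsβ hs0
    rw [hE1 s]
    have hR := Rt_pos hβ s
    have hRle : Real.sqrt (s^2 + bee a^2) ≤ 2 * s := by
      rw [show 2*s = Real.sqrt ((2*s)^2) by rw [Real.sqrt_sq (by linarith)]]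
      apply Real.sqrt_le_sqrt
      nlinarith
    have hAs : 0 ≤ Real.arsinh (s / bee a) :=
      Real.arsinh_nonneg_iff.mpr (div_nonneg hs0.le hβ.le)
    have hhalf : (1/2 : ℝ) ≤ s / Real.sqrt (s^2 + bee a^2) := by
      rw [le_div_iff₀ hR]; linarith
    have : (1/2) * Real.arsinh (s / bee a)
        ≤ (s / Real.sqrt (s^2 + bee a^2)) * Real.arsinh (s / bee a) :=
      mul_le_mul_of_nonneg_right hhalf hAs
    calc (1/2) * Real.arsinh (s / bee a) - 1
        ≤ (s / Real.sqrt (s^2 + bee a^2)) * Real.arsinh (s / bee a) - 1 := by linarith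
      _ = s * Real.arsinh (s / bee a) / Real.sqrt (s^2 + bee a^2) - 1 := by ring
  have htop : Tendsto e₁ atTop atTop := by
    apply tendsto_atTop_mono' atTop hlower
    have := (h2top.const_mul_atTop (by norm_num : (0:ℝ) < 1/2))
    exact tendsto_atTop_add_const_right atTop (-1) this |>.congr (fun s => by ring)
  -- strict monotonicity on [0, ∞)
  have hmono : StrictMonoOn e₁ (Ici 0) := by
    intro s hs t ht hst
    simp only [mem_Ici] at hs ht
    rw [hE1 s, hE1 t]
    have hRs := Rt_pos hβ s
    have hRt := Rt_pos hβ t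
    have ht0 : 0 < t := lt_of_le_of_lt hs hst
    have hAs : Real.arsinh (s / bee a) < Real.arsinh (t / bee a) :=
      Real.arsinh_lt_arsinh.mpr (by gcongr)
    have hAs0 : 0 ≤ Real.arsinh (s / bee a) :=
      Real.arsinh_nonneg_iff.mpr (div_nonneg hs hβ.le)
    have hg : s / Real.sqrt (s^2 + bee a^2) < t / Real.sqrt (t^2 + bee a^2) := by
      rw [div_lt_div_iff₀ hRs hRt]
      have hsq : (s * Real.sqrt (t^2 + bee a^2))^2 < (t * Real.sqrt (s^2 + bee a^2))^2 := by
        rw [mul_pow, mul_pow, Rt_sq hβ, Rt_sq hβ]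
        nlinarith [mul_pos (sub_pos.mpr hst) (by linarith : (0:ℝ) < t + s), pow_pos hβ 2]
      exact lt_of_pow_lt_pow_left₀ 2 (by positivity) hsq
    have hg0 : 0 ≤ s / Real.sqrt (s^2 + bee a^2) := div_nonneg hs hRs.le
    have := mul_lt_mul'' hg hAs hg0 hAs0
    calc s * Real.arsinh (s / bee a) / Real.sqrt (s^2 + bee a^2) - 1
        = (s / Real.sqrt (s^2 + bee a^2)) * Real.arsinh (s / bee a) - 1 := by ring
      _ < (t / Real.sqrt (t^2 + bee a^2)) * Real.arsinh (t / bee a) - 1 := by linarith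
      _ = t * Real.arsinh (t / bee a) / Real.sqrt (t^2 + bee a^2) - 1 := by ring
  refine ⟨hsmooth, heven, hzero, htop, ?_⟩
  -- existence and uniqueness of the zero
  obtain ⟨T, hT0, hTpos⟩ : ∃ T : ℝ, 0 ≤ T ∧ 0 < e₁ T := by
    obtain ⟨T, hT⟩ := ((eventually_ge_atTop (0:ℝ)).and
      (htop.eventually (eventually_gt_atTop (0:ℝ)))).exists
    exact ⟨T, hT.1, hT.2⟩
  have hcont : ContinuousOn e₁ (Icc 0 T) := hsmooth.continuous.continuousOn
  have h0mem : (0:ℝ) ∈ Ioo (e₁ 0) (e₁ T) := by rw [hzero]; exact ⟨by norm_num, hTpos⟩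
  obtain ⟨z, hzmem, hz0⟩ := intermediate_value_Ioo hT0 hcont h0mem
  refine ⟨z, hzmem.1, hz0, ?_⟩
  intro s hs hse
  rcases lt_trichotomy s z with h | h | h
  · exfalso
    have := hmono (le_of_lt hs) (le_of_lt hzmem.1) h
    rw [hse, hz0] at this; exact lt_irrefl 0 this
  · exact h
  · exfalso
    have := hmono (le_of_lt hzmem.1) (le_of_lt (lt_trans hzmem.1 h)) h
    rw [hse, hz0] at this; exact lt_irrefl 0 this
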